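/- Let 1 ≤ p < ∞, let 0 < δ < 1, and let μ be a σ-finite positive Borel measure on (0,∞). Then for every f ∈ A^p(𝕌), the truncated Hausdorff operator satisfies ||H_μ^δ(f)||_{A^p(𝕌)} ≤ (∫_δ^{1/δ} t^{2/p − 1} dμ(t)) · ||f||_{A^p(𝕌)}. -/

import Mathlib

open MeasureTheory Complex Set Filter
open scoped ENNReal NNReal Topology Real

noncomputable section

/-- The upper half plane `{z : ℂ | Im z > 0}`. -/
def UHP : Set ℂ := {z : ℂ | 0 < z.im}

/-- The `p`-th power of the Bergman `A^p(UHP)` norm: `(1/π) ∫_UHP |f|^p dA`. -/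
def apNormPow (p : ℝ) (f : ℂ → ℂ) : ℝ≥0∞ :=
  ENNReal.ofReal (1 / Real.pi) * ∫⁻ z in UHP, (‖f z‖₊ : ℝ≥0∞) ^ p

/-- The Bergman `A^p(UHP)` norm: `((1/π) ∫_UHP |f|^p dA)^(1/p)`. -/
def apNorm (p : ℝ) (f : ℂ → ℂ) : ℝ≥0∞ := apNormPow p f ^ (1 / p)

/-- Membership in the Bergman space `A^p(UHP)`: holomorphic on `UHP` with finite norm. -/
def MemAp (p : ℝ) (f : ℂ → ℂ) : Prop :=
  DifferentiableOn ℂ f UHP ∧ apNormPow p f < ⊤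

/-- The Hausdorff operator `H_μ f z = ∫_0^∞ (1/t) f(z/t) dμ(t)`. -/
def hausdorffOp (μ : Measure ℝ) (f : ℂ → ℂ) (z : ℂ) : ℂ :=
  ∫ t in Ioi (0:ℝ), (t : ℂ)⁻¹ * f (z / (t : ℂ)) ∂μ

/-- The truncated Hausdorff operator `H_μ^δ f z = ∫_{[δ,1/δ]} (1/t) f(z/t) dμ(t)`. -/
def hausdorffTrunc (μ : Measure ℝ) (δ : ℝ) (f : ℂ → ℂ) (z : ℂ) : ℂ :=
  ∫ t in Icc δ (1/δ), (t : ℂ)⁻¹ * f (z / (t : ℂ)) ∂μ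

/-! ### Auxiliary lemmas -/

section Aux

open Function

/-- **Minkowski's integral inequality** for `ℝ≥0∞`-valued functions. -/
lemma minkowski_lintegral {α β : Type*} [MeasurableSpace α] [MeasurableSpace β]
    (μ : Measure α) (ν : Measure β) [SFinite μ] [SigmaFinite ν]
    {p : ℝ} (hp : 1 ≤ p) {g : α → β → ℝ≥0∞} (hg : Measurable (uncurry g)) :
    ∫⁻ y, (∫⁻ x, g x y ∂μ) ^ p ∂ν ≤ (∫⁻ x, (∫⁻ y, g x y ^ p ∂ν) ^ (1/p) ∂μ) ^ p := by
  have hp0 : (0:ℝ) < p := lt_of_lt_of_le one_pos hp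
  rcases eq_or_lt_of_le hp with hp1 | hp1
  · -- case `p = 1` : this is Tonelli's theorem
    simp only [← hp1, ENNReal.rpow_one, one_div_one]
    exact le_of_eq (lintegral_lintegral_swap hg.aemeasurable).symm
  -- case `1 < p`
  set q : ℝ := Real.conjExponent p with hqdef
  have hpq : p.HolderConjugate q := Real.HolderConjugate.conjExponent hp1
  have hq0 : (0:ℝ) < q := hpq.symm.pos
  have hsum : 1/q + 1/p = 1 := by
    rw [add_comm, one_div, one_div]; exact hpq.inv_add_inv_eq_one
  set Φ : β → ℝ≥0∞ := fun y => ∫⁻ x, g x y ∂μ with hΦdef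
  have hΦ : Measurable Φ := hg.lintegral_prod_left
  have hΦp : Measurable fun y => Φ y ^ p := hΦ.pow_const p
  set K : ℝ≥0∞ := ∫⁻ x, (∫⁻ y, g x y ^ p ∂ν) ^ (1/p) ∂μ with hKdef
  rcases eq_or_ne K ⊤ with hKtop | hKtop
  · rw [hKtop, ENNReal.top_rpow_of_pos hp0]; exact le_top
  set A : ℕ → Set β := spanningSets ν with hA
  set I : ℕ → ℝ≥0∞ := fun n => ∫⁻ y in A n, min (Φ y ^ p) n ∂ν with hI
  have hIlt : ∀ n, I n < ⊤ := by
    intro n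
    calc I n ≤ ∫⁻ _ in A n, (n:ℝ≥0∞) ∂ν := lintegral_mono fun y => min_le_right _ _
      _ = n * ν (A n) := by rw [setLIntegral_const]
      _ < ⊤ := ENNReal.mul_lt_top (ENNReal.natCast_lt_top n) (measure_spanningSets_lt_top ν n)
  have key : ∀ n, I n ≤ K ^ p := by
    intro n
    rcases eq_or_ne (I n) 0 with h0 | h0
    · rw [h0]; exact zero_le
    have hmA : MeasurableSet (A n) := measurableSet_spanningSets ν n
    set h : β → ℝ≥0∞ := fun y => min (Φ y ^ p) n ^ (1/q) with hh
    have hhm : Measurable h := (hΦp.min measurable_const).pow_const _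
    have hmin_ne : ∀ y, min (Φ y ^ p) n ≠ ⊤ :=
      fun y => (lt_of_le_of_lt (min_le_right _ _) (ENNReal.natCast_lt_top n)).ne
    have hhne : ∀ y, h y ≠ ⊤ :=
      fun y => ENNReal.rpow_ne_top_of_nonneg (by positivity) (hmin_ne y)
    have step1 : I n ≤ ∫⁻ y in A n, h y * Φ y ∂ν := by
      refine lintegral_mono fun y => ?_
      have e1 : min (Φ y ^ p) n = h y * min (Φ y ^ p) n ^ (1/p) := by
        rw [hh, ← ENNReal.rpow_add_of_nonneg _ _ (by positivity) (by positivity), hsum,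
          ENNReal.rpow_one]
      rw [e1]
      refine mul_le_mul_right ?_ _
      calc min (Φ y ^ p) n ^ (1/p) ≤ (Φ y ^ p) ^ (1/p) :=
            ENNReal.rpow_le_rpow (min_le_left _ _) (by positivity)
        _ = Φ y := by
            rw [← ENNReal.rpow_mul, mul_one_div, div_self hp0.ne', ENNReal.rpow_one]
    have step2 : ∫⁻ y in A n, h y * Φ y ∂ν = ∫⁻ y in A n, ∫⁻ x, h y * g x y ∂μ ∂ν :=
      lintegral_congr fun y => (lintegral_const_mul' _ _ (hhne y)).symm
    have step3 : ∫⁻ y in A n, ∫⁻ x, h y * g x y ∂μ ∂ν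
        = ∫⁻ x, ∫⁻ y in A n, h y * g x y ∂ν ∂μ := by
      exact (lintegral_lintegral_swap
        (((hhm.comp measurable_snd).mul hg).aemeasurable)).symm
    have hIq : ∫⁻ y in A n, h y ^ q ∂ν = I n := by
      refine lintegral_congr fun y => ?_
      rw [hh, ← ENNReal.rpow_mul, one_div, inv_mul_cancel₀ hq0.ne', ENNReal.rpow_one]
    have step4 : ∀ x, ∫⁻ y in A n, h y * g x y ∂ν
        ≤ I n ^ (1/q) * (∫⁻ y in A n, g x y ^ p ∂ν) ^ (1/p) := by
      intro x
      have hgx : Measurable fun y => g x y :=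
        hg.comp (measurable_const.prodMk measurable_id)
      have := ENNReal.lintegral_mul_le_Lp_mul_Lq (ν.restrict (A n)) hpq.symm
        hhm.aemeasurable hgx.aemeasurable
      simpa [hIq] using this
    have step5 : ∫⁻ x, I n ^ (1/q) * (∫⁻ y in A n, g x y ^ p ∂ν) ^ (1/p) ∂μ
        ≤ I n ^ (1/q) * K := by
      rw [lintegral_const_mul' _ _
        (ENNReal.rpow_ne_top_of_nonneg (by positivity) (hIlt n).ne)]
      refine mul_le_mul_right ?_ _
      exact lintegral_mono fun x =>
        ENNReal.rpow_le_rpow (setLIntegral_le_lintegral _ _) (by positivity)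
    have hmain : I n ≤ I n ^ (1/q) * K :=
      step1.trans ((le_of_eq (step2.trans step3)).trans
        ((lintegral_mono step4).trans step5))
    have h1 : I n ^ (1/q) ≠ 0 :=
      (ENNReal.rpow_pos (pos_iff_ne_zero.mpr h0) (hIlt n).ne).ne'
    have h2 : I n ^ (1/q) ≠ ⊤ :=
      ENNReal.rpow_ne_top_of_nonneg (by positivity) (hIlt n).ne
    have hsplit : I n = I n ^ (1/q) * I n ^ (1/p) := by
      rw [← ENNReal.rpow_add_of_nonneg _ _ (by positivity) (by positivity), hsum,
        ENNReal.rpow_one]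
    have hle : I n ^ (1/p) ≤ K := by
      have h3 : I n ^ (1/q) * I n ^ (1/p) ≤ I n ^ (1/q) * K := hsplit ▸ hmain
      rwa [ENNReal.mul_le_mul_iff_right h1 h2] at h3
    calc I n = (I n ^ (1/p)) ^ p := by
          rw [← ENNReal.rpow_mul, one_div_mul_cancel hp0.ne', ENNReal.rpow_one]
      _ ≤ K ^ p := ENNReal.rpow_le_rpow hle hp0.le
  -- monotone convergence
  have hGmono : Monotone (fun n => (A n).indicator (fun y => min (Φ y ^ p) n)) := by
    intro m n hmn y
    dsimp only
    by_cases hy : y ∈ A m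
    · rw [indicator_of_mem hy, indicator_of_mem (monotone_spanningSets ν hmn hy)]
      exact min_le_min le_rfl (by exact_mod_cast Nat.cast_le.mpr hmn)
    · rw [indicator_of_notMem hy]; exact zero_le
  have hGsup : ∀ y, ⨆ n, (A n).indicator (fun y => min (Φ y ^ p) n) y = Φ y ^ p := by
    intro y
    obtain ⟨N, hN⟩ : ∃ N, y ∈ A N := by
      have : y ∈ ⋃ n, A n := by rw [hA, iUnion_spanningSets]; trivial
      exact mem_iUnion.mp this
    refine le_antisymm (iSup_le fun n => ?_) ?_
    · by_cases hy : y ∈ A n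
      · rw [indicator_of_mem hy]; exact min_le_left _ _
      · rw [indicator_of_notMem hy]; exact zero_le
    · have e1 : Φ y ^ p = Φ y ^ p ⊓ ⨆ n : ℕ, (n:ℝ≥0∞) := by
        rw [ENNReal.iSup_natCast, inf_top_eq]
      rw [e1, inf_iSup_eq]
      refine iSup_le fun n => le_iSup_of_le (N + n) ?_
      rw [indicator_of_mem (monotone_spanningSets ν (Nat.le_add_right N n) hN)]
      refine le_trans (inf_le_inf le_rfl ?_) (le_of_eq rfl)
      exact_mod_cast Nat.cast_le.mpr (Nat.le_add_left n N)
  calc ∫⁻ y, Φ y ^ p ∂ν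
      = ∫⁻ y, ⨆ n, (A n).indicator (fun y => min (Φ y ^ p) n) y ∂ν :=
        lintegral_congr fun y => (hGsup y).symm
    _ = ⨆ n, I n := by
        rw [lintegral_iSup
          (fun n => (hΦp.min measurable_const).indicator (measurableSet_spanningSets ν n)) hGmono]
        exact iSup_congr fun n => lintegral_indicator (measurableSet_spanningSets ν n) _
    _ ≤ K ^ p := iSup_le key

lemma isOpen_UHP : IsOpen UHP := isOpen_lt continuous_const Complex.continuous_im

/-- Change of variables `z ↦ z / t` on the upper half plane. -/
lemma lintegral_UHP_comp_div {t : ℝ} (ht : 0 < t) {h : ℂ → ℝ≥0∞} (hh : Measurable h) :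
    ∫⁻ z in UHP, h (z / (t:ℂ)) ∂volume = ENNReal.ofReal (t^2) * ∫⁻ z in UHP, h z ∂volume := by
  have hUm : MeasurableSet UHP := isOpen_UHP.measurableSet
  have hsm : Measurable fun z : ℂ => t⁻¹ • z := (continuous_const_smul _).measurable
  have hkey : ∀ z : ℂ, z / (t:ℂ) = t⁻¹ • z := by
    intro z
    rw [Complex.real_smul, Complex.ofReal_inv, div_eq_mul_inv, mul_comm]
  have hpre : (fun z : ℂ => t⁻¹ • z) ⁻¹' UHP = UHP := by
    ext z
    simp only [mem_preimage, UHP, mem_setOf_eq, Complex.smul_im, smul_eq_mul]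
    constructor
    · intro hz
      by_contra hz'
      push_neg at hz'
      nlinarith [inv_pos.mpr ht]
    · intro hz; exact mul_pos (inv_pos.mpr ht) hz
  have hmap : Measure.map (fun z : ℂ => t⁻¹ • z) (volume : Measure ℂ)
      = ENNReal.ofReal (t^2) • volume := by
    rw [Measure.map_addHaar_smul volume (inv_ne_zero ht.ne')]
    congr 1
    rw [Complex.finrank_real_complex, inv_pow, inv_inv, _root_.abs_of_nonneg (by positivity : (0:ℝ) ≤ t^2)]
  calc ∫⁻ z in UHP, h (z / (t:ℂ)) ∂volume
      = ∫⁻ z in UHP, h (t⁻¹ • z) ∂volume := by simp_rw [hkey]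
    _ = ∫⁻ y, h y ∂(Measure.map (fun z : ℂ => t⁻¹ • z) (volume.restrict UHP)) :=
        (lintegral_map hh hsm).symm
    _ = ∫⁻ y, h y ∂((Measure.map (fun z : ℂ => t⁻¹ • z) volume).restrict UHP) := by
        rw [Measure.restrict_map hsm hUm, hpre]
    _ = ENNReal.ofReal (t^2) * ∫⁻ z in UHP, h z ∂volume := by
        rw [hmap, Measure.restrict_smul, lintegral_smul_measure, smul_eq_mul]

end Aux

theorem stmt10 (p δ : ℝ) (hp : 1 ≤ p) (hδ0 : 0 < δ) (hδ1 : δ < 1)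
    (μ : Measure ℝ) [SigmaFinite μ] :
    ∀ f : ℂ → ℂ, MemAp p f →
      apNorm p (hausdorffTrunc μ δ f) ≤
        (∫⁻ t in Icc δ (1/δ), ENNReal.ofReal (t ^ (2 / p - 1)) ∂μ) * apNorm p f := by
  intro f hf
  have hp0 : (0:ℝ) < p := lt_of_lt_of_le one_pos hp
  have hUm : MeasurableSet UHP := isOpen_UHP.measurableSet
  set c : ℝ≥0∞ := ENNReal.ofReal (1 / Real.pi) with hc
  have hc0 : c ≠ 0 := by
    rw [hc]
    simp only [ne_eq, ENNReal.ofReal_eq_zero, not_le]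
    positivity
  set F : ℂ → ℂ := UHP.indicator f with hF
  have hFcont : ContinuousOn f UHP := hf.1.continuousOn
  have hFm : Measurable F := by
    have he : F = Function.extend (Subtype.val : UHP → ℂ) (fun x => f x) (fun _ => 0) := by
      funext z
      by_cases hz : z ∈ UHP
      · rw [hF, indicator_of_mem hz]
        exact (Function.Injective.extend_apply Subtype.val_injective (fun x : UHP => f x) (fun _ => 0) ⟨z, hz⟩).symm
      · rw [hF, indicator_of_notMem hz, Function.extend_apply']
        rintro ⟨a, rfl⟩
        exact hz a.2
    rw [he]
    exact (MeasurableEmbedding.subtype_coe hUm).measurable_extend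
      (continuousOn_iff_continuous_restrict.mp hFcont).measurable measurable_const
  -- membership fact
  have hmem : ∀ {t : ℝ}, t ∈ Icc δ (1/δ) → ∀ {z : ℂ}, z ∈ UHP → z / (t:ℂ) ∈ UHP := by
    intro t ht z hz
    have ht0 : 0 < t := lt_of_lt_of_le hδ0 ht.1
    have him : (z / (t:ℂ)).im = z.im * t⁻¹ := by
      rw [div_eq_mul_inv, ← Complex.ofReal_inv, Complex.mul_im]
      simp
    simp only [UHP, mem_setOf_eq] at hz ⊢
    rw [him]
    positivity
  -- replace f by F
  have htrunc_eq : ∀ z ∈ UHP, hausdorffTrunc μ δ f z = hausdorffTrunc μ δ F z := by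
    intro z hz
    unfold hausdorffTrunc
    refine setIntegral_congr_fun measurableSet_Icc fun t ht => ?_
    rw [hF, indicator_of_mem (hmem ht hz)]
  have hJeq : ∫⁻ z in UHP, (‖F z‖₊ : ℝ≥0∞) ^ p ∂volume
      = ∫⁻ z in UHP, (‖f z‖₊ : ℝ≥0∞) ^ p ∂volume := by
    refine setLIntegral_congr_fun hUm (fun z hz => ?_)
    rw [hF, indicator_of_mem hz]
  set J : ℝ≥0∞ := ∫⁻ z in UHP, (‖F z‖₊ : ℝ≥0∞) ^ p ∂volume with hJ
  have hJne : J ≠ ⊤ := by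
    intro htop
    have h2 : apNormPow p f = c * J := by
      simp only [apNormPow]
      rw [← hc, ← hJeq]
    have h3 := hf.2
    rw [h2, htop, ENNReal.mul_top hc0] at h3
    exact (lt_irrefl _ h3).elim
  set g : ℝ → ℂ → ℝ≥0∞ := fun t z => (‖(t:ℂ)⁻¹ * F (z / (t:ℂ))‖₊ : ℝ≥0∞) with hg
  have hgm : Measurable (Function.uncurry g) := by
    have hinv : Measurable fun q : ℝ × ℂ => ((q.1⁻¹ : ℝ) : ℂ) :=
      Complex.measurable_ofReal.comp measurable_fst.inv
    have he : Function.uncurry g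
        = fun q : ℝ × ℂ => (‖((q.1⁻¹:ℝ):ℂ) * F (q.2 * ((q.1⁻¹:ℝ):ℂ))‖₊ : ℝ≥0∞) := by
      funext q
      simp [Function.uncurry, hg, div_eq_mul_inv, Complex.ofReal_inv]
    rw [he]
    exact (hinv.mul (hFm.comp (measurable_snd.mul hinv))).enorm
  have hnorm : ∀ z : ℂ, (‖hausdorffTrunc μ δ F z‖₊ : ℝ≥0∞) ≤ ∫⁻ t in Icc δ (1/δ), g t z ∂μ :=
    fun z => enorm_integral_le_lintegral_enorm _
  set C : ℝ≥0∞ := ∫⁻ t in Icc δ (1/δ), ENNReal.ofReal (t ^ (2 / p - 1)) ∂μ with hC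
  -- the inner norm computation
  have hLt : ∀ t ∈ Icc δ (1/δ),
      (∫⁻ z in UHP, g t z ^ p ∂volume) ^ (1/p)
        = ENNReal.ofReal (t ^ (2 / p - 1)) * J ^ (1/p) := by
    intro t ht
    have ht0 : 0 < t := lt_of_lt_of_le hδ0 ht.1
    have hsplit : ∀ z, g t z ^ p
        = ENNReal.ofReal (t⁻¹ ^ p) * (‖F (z / (t:ℂ))‖₊ : ℝ≥0∞) ^ p := by
      intro z
      have h1 : (‖(t:ℂ)⁻¹‖₊ : ℝ≥0∞) = ENNReal.ofReal t⁻¹ := by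
        rw [← ENNReal.ofReal_coe_nnreal, coe_nnnorm, norm_inv, Complex.norm_real,
          Real.norm_eq_abs, abs_of_pos ht0]
      simp only [hg]
      rw [nnnorm_mul, ENNReal.coe_mul, ENNReal.mul_rpow_of_nonneg _ _ hp0.le, h1,
        ENNReal.ofReal_rpow_of_pos (inv_pos.mpr ht0)]
    have hcv : ∫⁻ z in UHP, (‖F (z / (t:ℂ))‖₊ : ℝ≥0∞) ^ p ∂volume
        = ENNReal.ofReal (t^2) * J :=
      lintegral_UHP_comp_div ht0 (hFm.enorm.pow_const p)
    have hreal : (t⁻¹ ^ p * t^2) ^ (1/p) = t ^ (2 / p - 1) := by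
      have e1 : t⁻¹ ^ p * t^2 = t ^ ((2:ℝ) - p) := by
        rw [Real.inv_rpow ht0.le, ← Real.rpow_neg ht0.le, ← Real.rpow_natCast t 2,
          ← Real.rpow_add ht0]
        norm_num
        rw [neg_add_eq_sub]
      rw [e1, ← Real.rpow_mul ht0.le, mul_one_div, sub_div, div_self hp0.ne']
    calc (∫⁻ z in UHP, g t z ^ p ∂volume) ^ (1/p)
        = (ENNReal.ofReal (t⁻¹ ^ p) * (ENNReal.ofReal (t^2) * J)) ^ (1/p) := by
          simp_rw [hsplit]
          rw [lintegral_const_mul' _ _ ENNReal.ofReal_ne_top, hcv]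
      _ = (ENNReal.ofReal (t⁻¹ ^ p * t^2) * J) ^ (1/p) := by
          rw [← mul_assoc, ← ENNReal.ofReal_mul (by positivity)]
      _ = ENNReal.ofReal (t ^ (2 / p - 1)) * J ^ (1/p) := by
          rw [ENNReal.mul_rpow_of_nonneg _ _ (by positivity),
            ENNReal.ofReal_rpow_of_pos (by positivity), hreal]
  have hJp_ne : J ^ (1/p) ≠ ⊤ := ENNReal.rpow_ne_top_of_nonneg (by positivity) hJne
  -- main chain
  calc apNorm p (hausdorffTrunc μ δ f)
      = (c * ∫⁻ z in UHP, (‖hausdorffTrunc μ δ F z‖₊ : ℝ≥0∞) ^ p ∂volume) ^ (1/p) := by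
        simp only [apNorm, apNormPow]
        congr 2
        exact setLIntegral_congr_fun hUm (fun z hz => by rw [htrunc_eq z hz])
    _ ≤ (c * ∫⁻ z in UHP, (∫⁻ t in Icc δ (1/δ), g t z ∂μ) ^ p ∂volume) ^ (1/p) := by
        refine ENNReal.rpow_le_rpow (mul_le_mul_right ?_ _) (by positivity)
        exact lintegral_mono fun z => ENNReal.rpow_le_rpow (hnorm z) hp0.le
    _ ≤ (c * (∫⁻ t in Icc δ (1/δ), (∫⁻ z in UHP, g t z ^ p ∂volume) ^ (1/p) ∂μ) ^ p) ^ (1/p) := by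
        refine ENNReal.rpow_le_rpow (mul_le_mul_right ?_ _) (by positivity)
        exact minkowski_lintegral (μ.restrict (Icc δ (1/δ))) (volume.restrict UHP) hp hgm
    _ = (c * (∫⁻ t in Icc δ (1/δ), ENNReal.ofReal (t ^ (2 / p - 1)) * J ^ (1/p) ∂μ) ^ p) ^ (1/p) := by
        congr 3
        exact setLIntegral_congr_fun measurableSet_Icc hLt
    _ = (c * (C * J ^ (1/p)) ^ p) ^ (1/p) := by
        rw [lintegral_mul_const' _ _ hJp_ne]
    _ = C * (c * J) ^ (1/p) := by
        rw [ENNReal.mul_rpow_of_nonneg _ _ hp0.le, ← ENNReal.rpow_mul J,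
          one_div_mul_cancel hp0.ne', ENNReal.rpow_one, mul_left_comm,
          ENNReal.mul_rpow_of_nonneg _ _ (by positivity : (0:ℝ) ≤ 1/p),
          ← ENNReal.rpow_mul C, mul_one_div, div_self hp0.ne', ENNReal.rpow_one]
    _ = C * apNorm p f := by
        simp only [apNorm, apNormPow]
        rw [← hc, ← hJeq]
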